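/- Let A ∈ ℝ^{n×N}, let W_1,…,W_N be subspaces of ℝ^M, and let c = (c_1,…,c_N) be a block coefficient vector with support S = {j : c_j ≠ 0}. Suppose the submatrix A_S is injective and ‖sgn(U(c)_S)^T A_S^† A_{·,j}‖_2 < 1 for all j ∉ S, where A_S^† is the Moore–Penrose pseudoinverse of A_S. Then c is the unique solution of problem (P1) with data Y = A·U(c). -/

import Mathlib

open scoped BigOperators
open Matrix

/-- Euclidean norm of a finite-dimensional real vector. -/
noncomputable def norm2 {ι : Type*} [Fintype ι] (v : ι → ℝ) : ℝ :=
  Real.sqrt (∑ i, v i ^ 2)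

/-- Mixed ℓ₂,₁ norm of a block coefficient vector. -/
noncomputable def l21 {N : ℕ} {m : Fin N → ℕ} (c : ∀ j, Fin (m j) → ℝ) : ℝ :=
  ∑ j, norm2 (c j)

open Classical in
/-- Mixed ℓ₂,₀ "norm": number of nonzero blocks. -/
noncomputable def l20 {N : ℕ} {m : Fin N → ℕ} (c : ∀ j, Fin (m j) → ℝ) : ℕ :=
  (Finset.univ.filter fun j => c j ≠ 0).card

/-- The matrix U(c) whose j-th row is (U_j c_j)ᵀ. -/
noncomputable def Ucmat {N M : ℕ} {m : Fin N → ℕ}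
    (U : ∀ j, Matrix (Fin M) (Fin (m j)) ℝ)
    (c : ∀ j, Fin (m j) → ℝ) : Matrix (Fin N) (Fin M) ℝ :=
  Matrix.of fun j i => (U j).mulVec (c j) i

section Helpers

open scoped RealInnerProductSpace

lemma norm2_eq_norm {ι : Type*} [Fintype ι] (v : ι → ℝ) :
    norm2 v = ‖(WithLp.equiv 2 (ι → ℝ)).symm v‖ := by
  simp [norm2, EuclideanSpace.norm_eq, sq_abs]

lemma norm2_nonneg {ι : Type*} [Fintype ι] (v : ι → ℝ) : 0 ≤ norm2 v :=
  Real.sqrt_nonneg _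

lemma norm2_zero {ι : Type*} [Fintype ι] : norm2 (0 : ι → ℝ) = 0 := by
  simp [norm2]

lemma norm2_pos {ι : Type*} [Fintype ι] {v : ι → ℝ} (hv : v ≠ 0) : 0 < norm2 v := by
  rw [norm2_eq_norm]
  simpa using hv

lemma inner_eq {ι : Type*} [Fintype ι] (v w : ι → ℝ) :
    ⟪(WithLp.equiv 2 (ι → ℝ)).symm v, (WithLp.equiv 2 (ι → ℝ)).symm w⟫ = ∑ i, v i * w i := by
  simp [PiLp.inner_apply, RCLike.inner_apply]
  exact Finset.sum_congr rfl fun i _ => mul_comm _ _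

lemma cs_abs {ι : Type*} [Fintype ι] (v w : ι → ℝ) :
    |∑ i, v i * w i| ≤ norm2 v * norm2 w := by
  rw [← inner_eq, norm2_eq_norm, norm2_eq_norm]
  exact abs_real_inner_le_norm _ _

lemma sgn_ineq {ι : Type*} [Fintype ι] (v w : ι → ℝ) (hv : v ≠ 0) :
    norm2 v + ∑ i, (v i / norm2 v) * w i ≤ norm2 (v + w) := by
  have hp : 0 < norm2 v := norm2_pos hv
  have h1 : ∑ i, (v i / norm2 v) * w i = (∑ i, v i * w i) / norm2 v := by
    rw [Finset.sum_div]; exact Finset.sum_congr rfl fun i _ => by ring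
  have h2 : ∑ i, v i * (v i + w i) ≤ norm2 v * norm2 (v + w) := by
    calc ∑ i, v i * (v i + w i) ≤ |∑ i, v i * (v i + w i)| := le_abs_self _
    _ ≤ _ := cs_abs _ _
  have h3 : ∑ i, v i * (v i + w i) = (norm2 v)^2 + ∑ i, v i * w i := by
    have h4 : (norm2 v)^2 = ∑ i, v i ^ 2 := by
      rw [norm2, Real.sq_sqrt]; positivity
    rw [h4, ← Finset.sum_add_distrib]
    exact Finset.sum_congr rfl fun i _ => by ring
  rw [h1]
  calc norm2 v + (∑ i, v i * w i) / norm2 v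
      = ((norm2 v)^2 + ∑ i, v i * w i) / norm2 v := by field_simp
    _ ≤ (norm2 v * norm2 (v + w)) / norm2 v := by
        gcongr
        rw [← h3]; exact h2
    _ = norm2 (v + w) := by field_simp

lemma UtU_mulVec {M k : ℕ} (U : Matrix (Fin M) (Fin k) ℝ) (hU : Uᵀ * U = 1)
    (v : Fin k → ℝ) : Uᵀ.mulVec (U.mulVec v) = v := by
  rw [Matrix.mulVec_mulVec, hU, Matrix.one_mulVec]

lemma mulVec_norm2 {M k : ℕ} (U : Matrix (Fin M) (Fin k) ℝ) (hU : Uᵀ * U = 1)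
    (v : Fin k → ℝ) : norm2 (U.mulVec v) = norm2 v := by
  unfold norm2
  congr 1
  calc ∑ i, (U.mulVec v) i ^ 2 = U.mulVec v ⬝ᵥ U.mulVec v := by
        simp [dotProduct, sq]
    _ = Uᵀ.mulVec (U.mulVec v) ⬝ᵥ v := by
        rw [Matrix.dotProduct_mulVec, Matrix.mulVec_transpose]
    _ = v ⬝ᵥ v := by rw [UtU_mulVec U hU]
    _ = ∑ i, v i ^ 2 := by simp [dotProduct, sq]

lemma mulVec_inj {M k : ℕ} (U : Matrix (Fin M) (Fin k) ℝ) (hU : Uᵀ * U = 1)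
    {v : Fin k → ℝ} (h : U.mulVec v = 0) : v = 0 := by
  have h2 := UtU_mulVec U hU v
  rw [h] at h2
  simpa using h2.symm

end Helpers

/-- Sufficient condition for unique (P1) recovery via the pseudoinverse:
if A_S is injective and ‖sgn(U(c)_S)ᵀ A_S† a_j‖₂ < 1 for all j ∉ S,
then c is the unique solution of (P1) with Y = A·U(c).  Here the
Moore–Penrose pseudoinverse A_S† is characterized by the four Penrose
equations. -/
theorem stmt9 {n N M : ℕ} {m : Fin N → ℕ}
    (A : Matrix (Fin n) (Fin N) ℝ)
    (U : ∀ j, Matrix (Fin M) (Fin (m j)) ℝ)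
    (hU : ∀ j, (U j)ᵀ * U j = 1)
    (c : ∀ j, Fin (m j) → ℝ)
    (S : Finset (Fin N)) (hS : ∀ j, j ∈ S ↔ c j ≠ 0)
    (AS : Matrix (Fin n) {j // j ∈ S} ℝ) (hAS : AS = Matrix.of fun i j => A i j.1)
    (hinj : ∀ u : Fin N → ℝ, (∀ j ∉ S, u j = 0) → A.mulVec u = 0 → u = 0)
    (G : Matrix {j // j ∈ S} (Fin n) ℝ)
    (hG1 : AS * G * AS = AS) (hG2 : G * AS * G = G)
    (hG3 : (AS * G)ᵀ = AS * G) (hG4 : (G * AS)ᵀ = G * AS)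
    (hcert : ∀ j ∉ S, norm2 (fun i : Fin M =>
      ∑ l : {j // j ∈ S},
        ((U l.1).mulVec (c l.1) i / norm2 ((U l.1).mulVec (c l.1))) *
          G.mulVec (fun p => A p j) l) < 1) :
    ∀ c' : (∀ j, Fin (m j) → ℝ),
      A * Ucmat U c' = A * Ucmat U c → c' ≠ c → l21 c < l21 c' := by
  intro c' hAc hne
  classical
  -- notation
  let X : Fin N → Fin M → ℝ := fun j => (U j).mulVec (c j)
  let X' : Fin N → Fin M → ℝ := fun j => (U j).mulVec (c' j)
  let H : Fin N → Fin M → ℝ := fun j => X' j - X j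
  let g : Fin N → {j // j ∈ S} → ℝ := fun j => G.mulVec (fun p => A p j)
  let sg : {j // j ∈ S} → Fin M → ℝ := fun l i => X l.1 i / norm2 (X l.1)
  let wv : Fin N → Fin M → ℝ := fun j i => ∑ l, sg l i * g j l
  -- columns of A * H vanish
  have hcol : ∀ i p, ∑ j, A p j * H j i = 0 := by
    intro i p
    have h1 : (A * Ucmat U c') p i = (A * Ucmat U c) p i := by rw [hAc]
    simp only [Matrix.mul_apply, Ucmat, Matrix.of_apply] at h1
    have h2 : ∑ j, A p j * H j i
        = (∑ j, A p j * X' j i) - ∑ j, A p j * X j i := by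
      rw [← Finset.sum_sub_distrib]
      exact Finset.sum_congr rfl fun j _ => by
        simp only [H, Pi.sub_apply]; ring
    rw [h2, h1, sub_self]
  -- X j = 0 off the support
  have hX0 : ∀ j ∉ S, X j = 0 := by
    intro j hj
    have : c j = 0 := by
      by_contra h; exact hj ((hS j).mpr h)
    simp only [X, this, Matrix.mulVec_zero]
  -- injectivity of AS
  have hASinj : ∀ w : {j // j ∈ S} → ℝ, AS.mulVec w = 0 → w = 0 := by
    intro w hw
    set u : Fin N → ℝ := fun j => if h : j ∈ S then w ⟨j, h⟩ else 0 with hu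
    have hu0 : ∀ j ∉ S, u j = 0 := fun j hj => dif_neg hj
    have hAu : A.mulVec u = 0 := by
      funext p
      have h1 : A.mulVec u p = ∑ j, A p j * u j := rfl
      have h2 : ∑ j, A p j * u j = ∑ j ∈ S, A p j * u j := by
        refine (Finset.sum_subset S.subset_univ fun j _ hj => ?_).symm
        rw [hu0 j hj, mul_zero]
      have h3 : ∑ j ∈ S, A p j * u j = ∑ l : {j // j ∈ S}, AS p l * w l := by
        rw [← Finset.sum_coe_sort S (fun j => A p j * u j)]
        refine Finset.sum_congr rfl fun l _ => ?_
        simp only [hAS, Matrix.of_apply, u, dif_pos l.2]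
      have h4 : ∑ l : {j // j ∈ S}, AS p l * w l = AS.mulVec w p := rfl
      rw [h1, h2, h3, h4, hw]
    have := hinj u hu0 hAu
    funext l
    have h5 := congrFun this l.1
    simpa [u, dif_pos l.2] using h5
  -- G is a left inverse of AS
  have hGinv : ∀ v : {j // j ∈ S} → ℝ, G.mulVec (AS.mulVec v) = v := by
    intro v
    have h0 : AS.mulVec (G.mulVec (AS.mulVec v) - v) = 0 := by
      have h1 := congrArg (fun B => B.mulVec v) hG1
      rw [← Matrix.mulVec_mulVec, ← Matrix.mulVec_mulVec] at h1
      rw [Matrix.mulVec_sub, h1, sub_self]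
    have h2 := hASinj _ h0
    rwa [sub_eq_zero] at h2
  -- the key representation of H on S
  have hHS : ∀ (i : Fin M) (l : {j // j ∈ S}),
      H l.1 i = -∑ j ∈ Sᶜ, H j i * g j l := by
    intro i l
    have hsplit : AS.mulVec (fun l => H l.1 i) = fun p => -∑ j ∈ Sᶜ, A p j * H j i := by
      funext p
      have h0 := hcol i p
      rw [← Finset.sum_add_sum_compl S (fun j => A p j * H j i)] at h0
      have h1 : AS.mulVec (fun l => H l.1 i) p = ∑ j ∈ S, A p j * H j i := by
        show ∑ l : {j // j ∈ S}, AS p l * H l.1 i = _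
        rw [← Finset.sum_coe_sort S (fun j => A p j * H j i)]
        exact Finset.sum_congr rfl fun l _ => by rw [hAS]; rfl
      rw [h1]
      linarith
    have h2 := hGinv (fun l => H l.1 i)
    rw [hsplit] at h2
    have h3 := congrFun h2 l
    rw [← h3]
    show ∑ p, G l p * (-∑ j ∈ Sᶜ, A p j * H j i) = _
    rw [← Finset.sum_neg_distrib]
    calc ∑ p, G l p * -∑ j ∈ Sᶜ, A p j * H j i
        = ∑ p, ∑ j ∈ Sᶜ, -(G l p * (A p j * H j i)) := by
          refine Finset.sum_congr rfl fun p _ => ?_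
          rw [mul_neg, Finset.mul_sum, ← Finset.sum_neg_distrib]
      _ = ∑ j ∈ Sᶜ, ∑ p, -(G l p * (A p j * H j i)) := Finset.sum_comm
      _ = ∑ j ∈ Sᶜ, -(H j i * g j l) := by
          refine Finset.sum_congr rfl fun j _ => ?_
          rw [Finset.sum_neg_distrib]
          congr 1
          show ∑ p, G l p * (A p j * H j i) = H j i * ∑ p, G l p * A p j
          rw [Finset.mul_sum]
          exact Finset.sum_congr rfl fun p _ => by ring
  -- key certificate identity
  have hkey : ∑ l : {j // j ∈ S}, (∑ i, sg l i * H l.1 i)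
      = -∑ j ∈ Sᶜ, ∑ i, wv j i * H j i := by
    calc ∑ l : {j // j ∈ S}, ∑ i, sg l i * H l.1 i
        = ∑ l : {j // j ∈ S}, ∑ i, ∑ j ∈ Sᶜ, -(sg l i * (H j i * g j l)) := by
          refine Finset.sum_congr rfl fun l _ => Finset.sum_congr rfl fun i _ => ?_
          rw [hHS i l, mul_neg, Finset.mul_sum, ← Finset.sum_neg_distrib]
      _ = ∑ l : {j // j ∈ S}, ∑ j ∈ Sᶜ, ∑ i, -(sg l i * (H j i * g j l)) :=
          Finset.sum_congr rfl fun l _ => Finset.sum_comm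
      _ = ∑ j ∈ Sᶜ, ∑ l : {j // j ∈ S}, ∑ i, -(sg l i * (H j i * g j l)) := Finset.sum_comm
      _ = ∑ j ∈ Sᶜ, ∑ i, ∑ l : {j // j ∈ S}, -(sg l i * (H j i * g j l)) :=
          Finset.sum_congr rfl fun j _ => Finset.sum_comm
      _ = -∑ j ∈ Sᶜ, ∑ i, wv j i * H j i := by
          rw [← Finset.sum_neg_distrib]
          refine Finset.sum_congr rfl fun j _ => ?_
          rw [← Finset.sum_neg_distrib]
          refine Finset.sum_congr rfl fun i _ => ?_
          rw [Finset.sum_neg_distrib]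
          congr 1
          show ∑ l : {j // j ∈ S}, sg l i * (H j i * g j l)
              = (∑ l : {j // j ∈ S}, sg l i * g j l) * H j i
          rw [Finset.sum_mul]
          exact Finset.sum_congr rfl fun l _ => by ring
  -- row inequalities on S
  have hrowS : ∀ l : {j // j ∈ S},
      norm2 (X l.1) + ∑ i, sg l i * H l.1 i ≤ norm2 (X' l.1) := by
    intro l
    have hcne : c l.1 ≠ 0 := (hS l.1).1 l.2
    have hXne : X l.1 ≠ 0 := fun h => hcne (mulVec_inj _ (hU l.1) h)
    have h1 := sgn_ineq (X l.1) (H l.1) hXne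
    have hXX : X l.1 + H l.1 = X' l.1 := by
      funext i; simp [H]
    rw [hXX] at h1
    exact h1
  -- certificate bound
  have hwv : ∀ j ∈ Sᶜ, norm2 (wv j) < 1 := fun j hj => hcert j (Finset.mem_compl.mp hj)
  have hterm : ∀ j ∈ Sᶜ,
      norm2 (H j) * (1 - norm2 (wv j)) ≤ norm2 (H j) - ∑ i, wv j i * H j i := by
    intro j hj
    have h1 : ∑ i, wv j i * H j i ≤ norm2 (wv j) * norm2 (H j) :=
      le_trans (le_abs_self _) (cs_abs _ _)
    nlinarith [norm2_nonneg (H j), norm2_nonneg (wv j)]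
  -- the two sums
  have hsum1 : l21 c = ∑ l : {j // j ∈ S}, norm2 (X l.1) := by
    simp only [l21]
    rw [← Finset.sum_add_sum_compl S (fun j => norm2 (c j))]
    have h0 : ∑ j ∈ Sᶜ, norm2 (c j) = 0 :=
      Finset.sum_eq_zero fun j hj => by
        have hc : c j = 0 := by
          by_contra h
          exact (Finset.mem_compl.mp hj) ((hS j).mpr h)
        rw [hc, norm2_zero]
    rw [h0, add_zero, ← Finset.sum_coe_sort S (fun j => norm2 (c j))]
    exact Finset.sum_congr rfl fun l _ => (mulVec_norm2 _ (hU _) _).symm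
  have hsum2 : l21 c' = (∑ l : {j // j ∈ S}, norm2 (X' l.1)) + ∑ j ∈ Sᶜ, norm2 (H j) := by
    simp only [l21]
    rw [← Finset.sum_add_sum_compl S (fun j => norm2 (c' j))]
    congr 1
    · rw [← Finset.sum_coe_sort S (fun j => norm2 (c' j))]
      exact Finset.sum_congr rfl fun l _ => (mulVec_norm2 _ (hU _) _).symm
    · refine Finset.sum_congr rfl fun j hj => ?_
      have h1 : H j = X' j := by
        show X' j - X j = X' j
        rw [hX0 j (Finset.mem_compl.mp hj), sub_zero]
      rw [h1]
      exact (mulVec_norm2 _ (hU _) _).symm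
  -- main inequality
  have hmain : l21 c + ∑ j ∈ Sᶜ, (norm2 (H j) - ∑ i, wv j i * H j i) ≤ l21 c' := by
    rw [hsum2, hsum1]
    have h1 : ∑ l : {j // j ∈ S}, norm2 (X l.1)
        + ∑ l : {j // j ∈ S}, (∑ i, sg l i * H l.1 i)
        ≤ ∑ l : {j // j ∈ S}, norm2 (X' l.1) := by
      rw [← Finset.sum_add_distrib]
      exact Finset.sum_le_sum fun l _ => hrowS l
    have h2 : ∑ j ∈ Sᶜ, (norm2 (H j) - ∑ i, wv j i * H j i)
        = ∑ j ∈ Sᶜ, norm2 (H j) + ∑ l : {j // j ∈ S}, (∑ i, sg l i * H l.1 i) := by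
      rw [hkey, Finset.sum_sub_distrib]
      ring
    linarith
  -- case split on whether H vanishes off S
  by_cases hout : ∀ j ∈ Sᶜ, H j = 0
  · exfalso
    apply hne
    have hH0 : ∀ j, H j = 0 := by
      intro j
      funext i
      have h5 := hinj (fun j => H j i)
        (fun j hj => by show H j i = 0; rw [hout j (Finset.mem_compl.mpr hj)]; rfl)
        (by funext p; exact hcol i p)
      exact congrFun h5 j
    funext j
    have h6 : (U j).mulVec (c' j) - (U j).mulVec (c j) = 0 := hH0 j
    rw [← Matrix.mulVec_sub] at h6
    exact sub_eq_zero.mp (mulVec_inj _ (hU j) h6)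
  · push_neg at hout
    obtain ⟨j0, hj0, hHj0⟩ := hout
    have hpos : 0 < ∑ j ∈ Sᶜ, (norm2 (H j) - ∑ i, wv j i * H j i) := by
      refine Finset.sum_pos' (fun j hj => ?_) ⟨j0, hj0, ?_⟩
      · have h8 := hwv j hj
        have h9 := norm2_nonneg (H j)
        have h10 := hterm j hj
        nlinarith
      · have h7 : 0 < norm2 (H j0) := norm2_pos hHj0
        have h8 := hwv j0 hj0
        have h9 := hterm j0 hj0
        nlinarith [mul_pos h7 (by linarith : (0:ℝ) < 1 - norm2 (wv j0))]
    linarith
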